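/- Let G be a finite group, K a normal solvable subgroup of G, and p, q primes dividing |G| such that p ≢ 1 (mod q), q ≢ 1 (mod p), and every subgroup of G of order pq is cyclic (equivalently, the product of a Sylow p- and Sylow q-subgroup inside any {p,q}-subgroup has order pq). If p divides |K|, then G contains an element of order pq. -/

import Mathlib

open Subgroup

section Aux

variable {A : Type*} [Group A] [Finite A]

lemma aux_exists_orderOf_eq_of_dvd {z : A} {m : ℕ} (hm : m ∣ orderOf z) (hm0 : m ≠ 0) :
    ∃ w : A, orderOf w = m := by
  obtain ⟨c, hc⟩ := hm
  have hz : orderOf z ≠ 0 := (orderOf_pos z).ne'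
  have hc0 : c ≠ 0 := by rintro rfl; simp [hc] at hz
  refine ⟨z ^ c, ?_⟩
  rw [orderOf_pow, hc, Nat.gcd_eq_right ⟨m, mul_comm m c⟩,
    Nat.mul_div_cancel _ (Nat.pos_of_ne_zero hc0)]

lemma aux_commute_case {p q : ℕ} (hp : p.Prime) (hq : q.Prime)
    (hpq : p ≠ q) (h1 : ¬ q ∣ p - 1) (P : Subgroup A) (hP : Nat.card P = p)
    {g : A} (hg : g ∈ normalizer (P : Set A)) (hgq : orderOf g = q) :
    ∃ a : A, orderOf a = p * q := by
  haveI : Fact p.Prime := ⟨hp⟩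
  haveI : Fact q.Prime := ⟨hq⟩
  haveI : NeZero p := ⟨hp.ne_zero⟩
  obtain ⟨x₀, hx₀⟩ := exists_prime_orderOf_dvd_card' (G := P) p (hP ▸ dvd_refl p)
  set x : A := (x₀ : A) with hxdef
  have hx : orderOf x = p := (orderOf_injective P.subtype Subtype.coe_injective x₀).trans hx₀
  have hx0ne : x₀ ≠ 1 := by
    intro h
    rw [h, orderOf_one] at hx₀
    exact hp.one_lt.ne' hx₀.symm
  have hmem : g * x * g⁻¹ ∈ P := (Subgroup.mem_normalizer_iff.mp hg x).mp x₀.2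
  obtain ⟨k, hk⟩ := Subgroup.mem_zpowers_iff.mp
    (mem_zpowers_of_prime_card (G := P) hP (g := x₀) (g' := ⟨g * x * g⁻¹, hmem⟩) hx0ne)
  have hk' : x ^ k = g * x * g⁻¹ := by simpa using congrArg Subtype.val hk
  have key : ∀ n : ℕ, g ^ n * x * (g ^ n)⁻¹ = x ^ (k ^ n) := by
    intro n
    induction n with
    | zero => simp
    | succ n ih =>
      have e1 : g ^ (n + 1) * x * (g ^ (n + 1))⁻¹ = g * (g ^ n * x * (g ^ n)⁻¹) * g⁻¹ := by
        group
      rw [e1, ih, ← conj_zpow, ← hk', ← zpow_mul, ← pow_succ']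
  have hq1 : g ^ q = 1 := by rw [← hgq]; exact pow_orderOf_eq_one g
  have hfixq : x ^ (k ^ q) = x := by
    have h := key q
    rw [hq1] at h
    simpa using h.symm
  have hdvd : (p : ℤ) ∣ k ^ q - 1 := by
    rw [← hx]
    exact orderOf_dvd_iff_zpow_eq_one.mpr (by rw [zpow_sub, hfixq, zpow_one]; simp)
  have hu : (k : ZMod p) ^ q = 1 := by
    have h0 : ((k ^ q - 1 : ℤ) : ZMod p) = 0 := (ZMod.intCast_zmod_eq_zero_iff_dvd _ p).mpr hdvd
    push_cast at h0
    rwa [sub_eq_zero] at h0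
  have hUnit : IsUnit ((k : ℤ) : ZMod p) := by
    refine IsUnit.of_mul_eq_one (((k : ℤ) : ZMod p) ^ (q - 1)) ?_
    rw [← pow_succ', Nat.sub_add_cancel hq.one_le, hu]
  obtain ⟨w, hw⟩ := hUnit
  have hw1 : w = 1 := by
    have hwq : w ^ q = 1 := by
      ext
      push_cast
      rw [hw, hu]
    rcases (Nat.dvd_prime hq).mp (orderOf_dvd_of_pow_eq_one hwq) with h | h
    · exact orderOf_eq_one_iff.mp h
    · exfalso
      apply h1
      haveI := Fintype.ofFinite (ZMod p)ˣ
      have hcd : orderOf w ∣ Fintype.card (ZMod p)ˣ := orderOf_dvd_card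
      rw [ZMod.card_units_eq_totient, Nat.totient_prime hp, h] at hcd
      exact hcd
  have hk1 : ((k : ℤ) : ZMod p) = 1 := by rw [← hw, hw1, Units.val_one]
  have hpk : (p : ℤ) ∣ k - 1 := by
    have h0 : ((k - 1 : ℤ) : ZMod p) = 0 := by push_cast; rw [hk1, sub_self]
    exact (ZMod.intCast_zmod_eq_zero_iff_dvd _ p).mp h0
  have hfix : x ^ k = x := by
    have hx1 : x ^ (k - 1) = 1 := orderOf_dvd_iff_zpow_eq_one.mp (by rw [hx]; exact hpk)
    calc x ^ k = x ^ (k - 1) * x ^ (1 : ℤ) := by rw [← zpow_add]; ring_nf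
    _ = x := by rw [hx1, one_mul, zpow_one]
  have hconj : g * x * g⁻¹ = x := by rw [← hk', hfix]
  have hcomm : Commute x g := by
    show x * g = g * x
    calc x * g = (g * x * g⁻¹) * g := by rw [hconj]
    _ = g * x := by group
  refine ⟨x * g, ?_⟩
  rw [hcomm.orderOf_mul_eq_mul_orderOf_of_coprime
    (by rw [hx, hgq]; exact (Nat.coprime_primes hp hq).mpr hpq), hx, hgq]

lemma aux_fact_one {n p : ℕ} (hp : p.Prime) (hn : n ≠ 0) (h1 : p ∣ n) (h2 : ¬ p ^ 2 ∣ n) :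
    n.factorization p = 1 := by
  have ha : 1 ≤ n.factorization p := by
    rw [← Nat.Prime.pow_dvd_iff_le_factorization hp hn, pow_one]; exact h1
  have hb : ¬ 2 ≤ n.factorization p := fun h =>
    h2 ((Nat.Prime.pow_dvd_iff_le_factorization hp hn).mpr h)
  omega

lemma aux_frattini_case {p q : ℕ} (hp : p.Prime) (hq : q.Prime) (hpq : p ≠ q)
    (h1 : ¬ q ∣ p - 1) (N : Subgroup A) [N.Normal]
    (hpN : p ∣ Nat.card N) (hp2 : ¬ p ^ 2 ∣ Nat.card N)
    (hqA : q ∣ Nat.card A) (hqN : ¬ q ∣ Nat.card N) :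
    ∃ a : A, orderOf a = p * q := by
  haveI : Fact p.Prime := ⟨hp⟩
  haveI : Fact q.Prime := ⟨hq⟩
  have hNcard : Nat.card N ≠ 0 := Nat.card_pos.ne'
  obtain ⟨P⟩ : Nonempty (Sylow p N) := inferInstance
  have hcardP : Nat.card P = p := by
    rw [P.card_eq_multiplicity, aux_fact_one hp hNcard hpN hp2, pow_one]
  set P' : Subgroup A := (P : Subgroup N).map N.subtype with hP'def
  have hcardP' : Nat.card P' = p := by
    rw [← Nat.card_congr ((P : Subgroup N).equivMapOfInjective N.subtype
      Subtype.coe_injective).toEquiv]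
    exact hcardP
  have htop : normalizer (P' : Set A) ⊔ N = ⊤ := Sylow.normalizer_sup_eq_top P
  set H := normalizer (P' : Set A) with hHdef
  have hsurj : Function.Surjective ((QuotientGroup.mk' N).comp H.subtype) := by
    intro y
    obtain ⟨a, rfl⟩ := QuotientGroup.mk'_surjective N y
    have ha : a ∈ (↑(H ⊔ N) : Set A) := by rw [htop]; trivial
    rw [Subgroup.mul_normal H N] at ha
    obtain ⟨h, hh, n, hn, rfl⟩ := ha
    refine ⟨⟨h, hh⟩, ?_⟩
    simp only [MonoidHom.comp_apply, QuotientGroup.mk'_apply, Subgroup.coe_subtype]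
    rw [QuotientGroup.eq]
    simpa [mul_assoc] using hn
  have hqQuot : q ∣ Nat.card (A ⧸ N) := by
    have hc := Subgroup.card_eq_card_quotient_mul_card_subgroup N
    rcases (Nat.Prime.dvd_mul hq).mp (hc ▸ hqA) with h | h
    · exact h
    · exact absurd h hqN
  have hqH : q ∣ Nat.card H := hqQuot.trans (Subgroup.card_dvd_of_surjective _ hsurj)
  obtain ⟨g₀, hg₀⟩ := exists_prime_orderOf_dvd_card' (G := H) q hqH
  have hgmem : (g₀ : A) ∈ normalizer (P' : Set A) := g₀.2
  have hgord : orderOf (g₀ : A) = q :=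
    (orderOf_injective H.subtype Subtype.coe_injective g₀).trans hg₀
  exact aux_commute_case hp hq hpq h1 P' hcardP' hgmem hgord

end Aux

lemma aux_commutator_ne_top (H : Type*) [Group H] [Group.IsSolvable H] [Nontrivial H] :
    commutator H ≠ ⊤ := by
  intro htop
  have hds : ∀ n, derivedSeries H n = ⊤ := by
    intro n
    induction n with
    | zero => exact derivedSeries_zero H
    | succ n ih => rw [derivedSeries_succ, ih, ← commutator_def, htop]
  obtain ⟨n, hn⟩ := Group.IsSolvable.solvable (G := H)
  obtain ⟨a, ha⟩ := exists_ne (1 : H)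
  exact ha (Subgroup.mem_bot.mp (hn ▸ (hds n ▸ Subgroup.mem_top a)))

lemma aux_solvable_case {p q : ℕ} (hp : p.Prime) (hq : q.Prime) (hpq : p ≠ q)
    (h1 : ¬ q ∣ p - 1) (h2 : ¬ p ∣ q - 1) :
    ∀ (n : ℕ) (H : Type*) [Group H] [Finite H], IsSolvable H → Nat.card H ≤ n →
      p ∣ Nat.card H → ¬ p ^ 2 ∣ Nat.card H → q ∣ Nat.card H → ¬ q ^ 2 ∣ Nat.card H →
      ∃ x : H, orderOf x = p * q := by
  haveI : Fact p.Prime := ⟨hp⟩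
  haveI : Fact q.Prime := ⟨hq⟩
  intro n
  induction n with
  | zero =>
    intro H _ _ _ hn _ _ _ _
    exact absurd hn (by have := Nat.card_pos (α := H); omega)
  | succ n ih =>
    intro H _ _ hsolv hn hpH hp2 hqH hq2
    haveI : Group.IsSolvable H := hsolv
    set N : Subgroup H := commutator H with hNdef
    have hdvdN : Nat.card N ∣ Nat.card H := Subgroup.card_subgroup_dvd_card N
    have hp2N : ¬ p ^ 2 ∣ Nat.card N := fun h => hp2 (h.trans hdvdN)
    have hq2N : ¬ q ^ 2 ∣ Nat.card N := fun h => hq2 (h.trans hdvdN)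
    by_cases hpN : p ∣ Nat.card N <;> by_cases hqN : q ∣ Nat.card N
    · haveI : Nontrivial H := Finite.one_lt_card_iff_nontrivial.mp
        (lt_of_lt_of_le hp.one_lt (Nat.le_of_dvd Nat.card_pos hpH))
      have hne : N ≠ ⊤ := aux_commutator_ne_top H
      have hlt : Nat.card N < Nat.card H := lt_of_le_of_ne (Nat.le_of_dvd Nat.card_pos hdvdN)
        (fun h => hne (Subgroup.eq_top_of_card_eq N h))
      obtain ⟨x, hx⟩ := ih N (inferInstance : Group.IsSolvable N) (by omega) hpN hp2N hqN hq2N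
      exact ⟨x, (orderOf_injective N.subtype Subtype.coe_injective x).trans hx⟩
    · exact aux_frattini_case hp hq hpq h1 N hpN hp2N hqH hqN
    · obtain ⟨a, ha⟩ := aux_frattini_case hq hp hpq.symm h2 N hqN hq2N hpH hpN
      exact ⟨a, by rw [ha, mul_comm]⟩
    · have hcq : Nat.card H = Nat.card (H ⧸ N) * Nat.card N :=
        Subgroup.card_eq_card_quotient_mul_card_subgroup N
      have hpAb : p ∣ Nat.card (Abelianization H) := by
        rcases (Nat.Prime.dvd_mul hp).mp (hcq ▸ hpH) with h | h
        exacts [h, absurd h hpN]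
      have hqAb : q ∣ Nat.card (Abelianization H) := by
        rcases (Nat.Prime.dvd_mul hq).mp (hcq ▸ hqH) with h | h
        exacts [h, absurd h hqN]
      obtain ⟨x, hx⟩ := exists_prime_orderOf_dvd_card' (G := Abelianization H) p hpAb
      obtain ⟨y, hy⟩ := exists_prime_orderOf_dvd_card' (G := Abelianization H) q hqAb
      have hxy : orderOf (x * y) = p * q := by
        rw [(Commute.all x y).orderOf_mul_eq_mul_orderOf_of_coprime
          (by rw [hx, hy]; exact (Nat.coprime_primes hp hq).mpr hpq), hx, hy]
      obtain ⟨z, hz⟩ := QuotientGroup.mk'_surjective (commutator H) (x * y)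
      have hdvd : p * q ∣ orderOf z := by
        have h := orderOf_map_dvd (QuotientGroup.mk' (commutator H)) z
        rw [hz] at h
        exact (show p * q ∣ orderOf (x * y) from hxy ▸ dvd_refl _).trans h
      exact aux_exists_orderOf_eq_of_dvd hdvd ((Nat.mul_pos hp.pos hq.pos).ne')

theorem stmt_4 {G : Type*} [Group G] [Finite G] (K : Subgroup G) [K.Normal]
    (hK : IsSolvable K) (p q : ℕ) (hp : p.Prime) (hq : q.Prime) (hpq : p ≠ q)
    (hpG : p ∣ Nat.card G) (hqG : q ∣ Nat.card G)
    (h1 : ¬ q ∣ p - 1) (h2 : ¬ p ∣ q - 1)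
    (hsylp : (Nat.card G).factorization p = 1)
    (hsylq : (Nat.card G).factorization q = 1)
    (hpK : p ∣ Nat.card K) :
    ∃ x : G, orderOf x = p * q := by
  have hG0 : Nat.card G ≠ 0 := Nat.card_pos.ne'
  have hp2 : ¬ p ^ 2 ∣ Nat.card G := by
    intro h
    have := (Nat.Prime.pow_dvd_iff_le_factorization hp hG0).mp h
    omega
  have hq2 : ¬ q ^ 2 ∣ Nat.card G := by
    intro h
    have := (Nat.Prime.pow_dvd_iff_le_factorization hq hG0).mp h
    omega
  have hdvdK : Nat.card K ∣ Nat.card G := Subgroup.card_subgroup_dvd_card K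
  have hp2K : ¬ p ^ 2 ∣ Nat.card K := fun h => hp2 (h.trans hdvdK)
  by_cases hqK : q ∣ Nat.card K
  · obtain ⟨x, hx⟩ := aux_solvable_case hp hq hpq h1 h2 (Nat.card K) K hK le_rfl hpK hp2K hqK
      (fun h => hq2 (h.trans hdvdK))
    exact ⟨x, (orderOf_injective K.subtype Subtype.coe_injective x).trans hx⟩
  · exact aux_frattini_case hp hq hpq h1 K hpK hp2K hqG hqK
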